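/- Suppose Bernoulli(p) site percolation on a Cayley graph G of Γ (with generating set S) has a unique infinite cluster almost surely. Then the cost of the Bernoulli action of Γ on ([0,1]^Γ, λ^Γ) is at most 1 + θ(p)(|S| − 1). -/

import Mathlib

open MeasureTheory
open scoped ENNReal

/-- `μ` is the Bernoulli(`p`) product measure on site configurations `V → Bool`. -/
def IsBernoulli {V : Type*} (μ : MeasureTheory.Measure (V → Bool)) (p : ℝ) : Prop :=
  ∀ (s : Finset V) (f : V → Bool),
    μ {ω | ∀ v ∈ s, ω v = f v} = ∏ v ∈ s, ENNReal.ofReal (if f v then p else 1 - p)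

/-- The Cayley graph of a group with respect to a generating set `S`. -/
def cayleyGraph (Γ : Type*) [Group Γ] (S : Set Γ) : SimpleGraph Γ :=
  SimpleGraph.fromRel (fun u v => u⁻¹ * v ∈ S)

/-- `u` and `v` are joined by a path all of whose vertices are open in `ω`. -/
def OpenConn {V : Type*} (G : SimpleGraph V) (ω : V → Bool) (u v : V) : Prop :=
  ∃ w : G.Walk u v, ∀ x ∈ w.support, ω x = true

/-- `v` belongs to an infinite cluster of the site percolation configuration `ω`. -/
def InInfCluster {V : Type*} (G : SimpleGraph V) (ω : V → Bool) (v : V) : Prop :=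
  ω v = true ∧ {u | OpenConn G ω v u}.Infinite

/-- The collection of infinite clusters of the configuration `ω`. -/
def InfClusters {V : Type*} (G : SimpleGraph V) (ω : V → Bool) : Set (Set V) :=
  {c | ∃ v, InInfCluster G ω v ∧ c = {u | OpenConn G ω v u}}

/-- The Bernoulli shift action of `Γ` on `[0,1]^Γ` (modelled on `Γ → ℝ`). -/
def shift {Γ : Type*} [Group Γ] (γ : Γ) (x : Γ → ℝ) : Γ → ℝ := fun δ => x (γ⁻¹ * δ)

/-- `μ` is the product over `Γ` of Lebesgue measure on `[0,1]`: coordinates are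
i.i.d. uniform on `[0,1]`. -/
def IsUniformProduct {Γ : Type*} (μ : MeasureTheory.Measure (Γ → ℝ)) : Prop :=
  ∀ (s : Finset Γ) (a : Γ → ℝ), (∀ γ ∈ s, a γ ∈ Set.Icc (0:ℝ) 1) →
    μ {x | ∀ γ ∈ s, x γ ≤ a γ} = ∏ γ ∈ s, ENNReal.ofReal (a γ)

/-- The percolation configuration at level `p` read off from the uniform labels `x`. -/
noncomputable def config {Γ : Type*} (p : ℝ) (x : Γ → ℝ) : Γ → Bool := fun γ => decide (x γ ≤ p)

/-- `V_p(x) = {γ⁻¹x : γ ∈ Γ, x(γ) ≤ p}` inside the Bernoulli space. -/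
def Vp {Γ : Type*} [Group Γ] (p : ℝ) (x : Γ → ℝ) : Set (Γ → ℝ) :=
  {y | ∃ γ : Γ, x γ ≤ p ∧ y = shift γ⁻¹ x}

/-- A single Cayley-graphing edge step staying inside the set `A`. -/
def stepIn {Γ : Type*} [Group Γ] (S : Finset Γ) (A : Set (Γ → ℝ)) (u v : Γ → ℝ) : Prop :=
  u ∈ A ∧ v ∈ A ∧ ∃ s ∈ S, v = shift s u

/-- Connectivity within `A` by Cayley-graphing edges. -/
def ConnIn {Γ : Type*} [Group Γ] (S : Finset Γ) (A : Set (Γ → ℝ)) (u v : Γ → ℝ) : Prop :=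
  Relation.ReflTransGen (stepIn S A) u v

/-- `Y_p`: the set of points lying in an infinite cluster of the graph induced by the
Cayley graphing edges on `V_p(x)`. -/
def Yp {Γ : Type*} [Group Γ] (S : Finset Γ) (p : ℝ) : Set (Γ → ℝ) :=
  {x | x ∈ Vp p x ∧ {y | ConnIn S (Vp p x) x y}.Infinite}

/-- A graphing of a countable equivalence relation `R` on `(X, μ)`: a measurable symmetric
set of edges `E ⊆ R` whose connected components coincide with the `R`-classes. -/
structure Graphing (X : Type*) [MeasurableSpace X] (μ : MeasureTheory.Measure X)
    (R : X → X → Prop) where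
  E : X → X → Prop
  symm : ∀ x y, E x y → E y x
  sub : ∀ ⦃x y⦄, E x y → R x y
  spans : ∀ ⦃x y⦄, R x y → Relation.ReflTransGen E x y
  meas : MeasurableSet {q : X × X | E q.1 q.2}

/-- The cost of a graphing: half the integral of the degree. -/
noncomputable def Graphing.cost {X : Type*} [MeasurableSpace X]
    {μ : MeasureTheory.Measure X} {R : X → X → Prop} (g : Graphing X μ R) : ℝ≥0∞ :=
  (1 / 2) * ∫⁻ x, ({y | g.E x y}.encard : ℝ≥0∞) ∂μ

/-- The cost of a relation: the infimum of the costs of its graphings. -/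
noncomputable def relCost (X : Type*) [MeasurableSpace X] (μ : MeasureTheory.Measure X)
    (R : X → X → Prop) : ℝ≥0∞ :=
  ⨅ g : Graphing X μ R, g.cost

/-- The orbit equivalence relation of the Bernoulli shift action. -/
def orbitRel (Γ : Type*) [Group Γ] (x y : Γ → ℝ) : Prop := ∃ γ : Γ, y = shift γ x

section Part1
open Set MeasureTheory

variable {Γ : Type*} [Group Γ]

lemma shift_apply (γ : Γ) (x : Γ → ℝ) (δ : Γ) : shift γ x δ = x (γ⁻¹ * δ) := rfl

@[simp] lemma shift_one (x : Γ → ℝ) : shift (1 : Γ) x = x := by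
  funext δ; simp [shift]

lemma shift_shift (a b : Γ) (x : Γ → ℝ) : shift a (shift b x) = shift (a * b) x := by
  funext δ; simp [shift, mul_assoc]

lemma measurable_shift (γ : Γ) : Measurable (shift γ : (Γ → ℝ) → (Γ → ℝ)) :=
  measurable_pi_iff.mpr fun δ => measurable_pi_apply _

lemma measurableSet_rect (s : Finset Γ) (a : Γ → ℝ) :
    MeasurableSet {x : Γ → ℝ | ∀ γ ∈ s, x γ ≤ a γ} := by
  have : {x : Γ → ℝ | ∀ γ ∈ s, x γ ≤ a γ} = ⋂ γ ∈ s, {x : Γ → ℝ | x γ ≤ a γ} := by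
    ext x; simp
  rw [this]
  exact MeasurableSet.biInter s.countable_toSet
    (fun γ _ => measurableSet_le (measurable_pi_apply γ) measurable_const)

variable [Countable Γ] {μ : Measure (Γ → ℝ)} [IsProbabilityMeasure μ]

lemma single_rect (hμ : IsUniformProduct μ) (γ : Γ) {a : ℝ} (ha : a ∈ Set.Icc (0:ℝ) 1) :
    μ {x | x γ ≤ a} = ENNReal.ofReal a := by
  have := hμ {γ} (fun _ => a) (fun _ _ => ha)
  simpa using this

lemma null_le_zero (hμ : IsUniformProduct μ) (γ : Γ) : μ {x | x γ ≤ (0:ℝ)} = 0 := by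
  simpa using single_rect hμ γ (by simp : (0:ℝ) ∈ Set.Icc (0:ℝ) 1)

lemma null_gt_one (hμ : IsUniformProduct μ) (γ : Γ) : μ {x | (1:ℝ) < x γ} = 0 := by
  have h1 : μ {x | x γ ≤ (1:ℝ)} = 1 := by
    simpa using single_rect hμ γ (by simp : (1:ℝ) ∈ Set.Icc (0:ℝ) 1)
  have hm : MeasurableSet {x : Γ → ℝ | x γ ≤ (1:ℝ)} :=
    measurableSet_le (measurable_pi_apply γ) measurable_const
  have : {x : Γ → ℝ | (1:ℝ) < x γ} = {x : Γ → ℝ | x γ ≤ (1:ℝ)}ᶜ := by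
    ext x; simp [not_le]
  rw [this, measure_compl hm (measure_ne_top μ _), h1, measure_univ]
  simp

/-- General rectangle formula. -/
lemma rect' (hμ : IsUniformProduct μ) (s : Finset Γ) (a : Γ → ℝ) :
    μ {x | ∀ γ ∈ s, x γ ≤ a γ} = ∏ γ ∈ s, ENNReal.ofReal (min (a γ) 1) := by
  by_cases h : ∀ γ ∈ s, 0 ≤ a γ
  · set b : Γ → ℝ := fun γ => min (a γ) 1 with hb
    have hbi : ∀ γ ∈ s, b γ ∈ Set.Icc (0:ℝ) 1 := fun γ hγ =>
      ⟨le_min (h γ hγ) zero_le_one, min_le_right _ _⟩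
    have hball := hμ s b hbi
    have hsub : {x : Γ → ℝ | ∀ γ ∈ s, x γ ≤ b γ} ⊆ {x | ∀ γ ∈ s, x γ ≤ a γ} :=
      fun x hx γ hγ => le_trans (hx γ hγ) (min_le_left _ _)
    have hN : μ (⋃ γ : Γ, {x : Γ → ℝ | (1:ℝ) < x γ}) = 0 :=
      measure_iUnion_null fun γ => null_gt_one hμ γ
    have hsub2 : {x : Γ → ℝ | ∀ γ ∈ s, x γ ≤ a γ} ⊆
        {x : Γ → ℝ | ∀ γ ∈ s, x γ ≤ b γ} ∪ ⋃ γ : Γ, {x : Γ → ℝ | (1:ℝ) < x γ} := by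
      intro x hx
      by_cases hxb : ∀ γ ∈ s, x γ ≤ b γ
      · exact Or.inl hxb
      · push_neg at hxb
        obtain ⟨γ, hγs, hγ⟩ := hxb
        refine Or.inr (Set.mem_iUnion.mpr ⟨γ, ?_⟩)
        have : ¬ x γ ≤ 1 := fun hle => absurd (le_min (hx γ hγs) hle) (not_le.mpr hγ)
        exact not_le.mp this
    have h1 : μ {x : Γ → ℝ | ∀ γ ∈ s, x γ ≤ a γ} ≤ μ {x : Γ → ℝ | ∀ γ ∈ s, x γ ≤ b γ} := by
      calc μ {x : Γ → ℝ | ∀ γ ∈ s, x γ ≤ a γ}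
          ≤ μ ({x : Γ → ℝ | ∀ γ ∈ s, x γ ≤ b γ} ∪ ⋃ γ : Γ, {x : Γ → ℝ | (1:ℝ) < x γ}) :=
            measure_mono hsub2
        _ ≤ μ {x : Γ → ℝ | ∀ γ ∈ s, x γ ≤ b γ} + μ (⋃ γ : Γ, {x : Γ → ℝ | (1:ℝ) < x γ}) :=
            measure_union_le _ _
        _ = μ {x : Γ → ℝ | ∀ γ ∈ s, x γ ≤ b γ} := by rw [hN, add_zero]
    have h2 : μ {x : Γ → ℝ | ∀ γ ∈ s, x γ ≤ b γ} ≤ μ {x : Γ → ℝ | ∀ γ ∈ s, x γ ≤ a γ} := measure_mono hsub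
    have : μ {x : Γ → ℝ | ∀ γ ∈ s, x γ ≤ a γ} = μ {x : Γ → ℝ | ∀ γ ∈ s, x γ ≤ b γ} :=
      le_antisymm h1 h2
    rw [this, hball]
  · push_neg at h
    obtain ⟨γ₀, hγ₀s, hγ₀⟩ := h
    have hz : μ {x : Γ → ℝ | ∀ γ ∈ s, x γ ≤ a γ} = 0 := by
      refine measure_mono_null (fun x hx => ?_) (null_le_zero hμ γ₀)
      exact le_trans (hx γ₀ hγ₀s) (le_of_lt hγ₀)
    rw [hz]
    refine (Finset.prod_eq_zero hγ₀s ?_).symm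
    rw [ENNReal.ofReal_eq_zero]
    exact le_trans (min_le_left _ _) (le_of_lt hγ₀)

end Part1

section Part2
open Set MeasureTheory

variable {Γ : Type*} [Group Γ]

/-- The π-system of lower rectangles. -/
def rectSet (Γ : Type*) [Group Γ] : Set (Set (Γ → ℝ)) :=
  {t | ∃ (s : Finset Γ) (a : Γ → ℝ), t = {x | ∀ γ ∈ s, x γ ≤ a γ}}

lemma isPiSystem_rectSet : IsPiSystem (rectSet Γ) := by
  classical
  rintro t1 ⟨s1, a1, rfl⟩ t2 ⟨s2, a2, rfl⟩ -
  refine ⟨s1 ∪ s2,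
    fun γ => if γ ∈ s1 then (if γ ∈ s2 then min (a1 γ) (a2 γ) else a1 γ) else a2 γ, ?_⟩
  ext x
  simp only [Set.mem_inter_iff, Set.mem_setOf_eq, Finset.mem_union]
  constructor
  · rintro ⟨h1, h2⟩ γ hγ
    rcases hγ with hγ1 | hγ2
    · simp only [hγ1, if_true]
      by_cases hγ2 : γ ∈ s2
      · simp only [hγ2, if_true]; exact le_min (h1 γ hγ1) (h2 γ hγ2)
      · simp only [hγ2, if_false]; exact h1 γ hγ1
    · by_cases hγ1 : γ ∈ s1
      · simp only [hγ1, if_true]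
        by_cases h2' : γ ∈ s2
        · simp only [h2', if_true]; exact le_min (h1 γ hγ1) (h2 γ hγ2)
        · exact absurd hγ2 h2'
      · simp only [hγ1, if_false]; exact h2 γ hγ2
  · intro h
    constructor
    · intro γ hγ1
      have := h γ (Or.inl hγ1)
      simp only [hγ1, if_true] at this
      by_cases hγ2 : γ ∈ s2
      · simp only [hγ2, if_true] at this; exact le_trans this (min_le_left _ _)
      · simpa only [hγ2, if_false] using this
    · intro γ hγ2
      have := h γ (Or.inr hγ2)
      by_cases hγ1 : γ ∈ s1
      · simp only [hγ1, hγ2, if_true] at this; exact le_trans this (min_le_right _ _)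
      · simpa only [hγ1, if_false] using this

lemma pi_eq_generateFrom_rectSet :
    (inferInstance : MeasurableSpace (Γ → ℝ)) = .generateFrom (rectSet Γ) := by
  refine le_antisymm ?_ (MeasurableSpace.generateFrom_le ?_)
  · show (MeasurableSpace.pi : MeasurableSpace (Γ → ℝ)) ≤ _
    rw [MeasurableSpace.pi]
    refine iSup_le fun γ => ?_
    show MeasurableSpace.comap (fun b : Γ → ℝ => b γ) (borel ℝ) ≤ _
    rw [borel_eq_generateFrom_Iic ℝ, MeasurableSpace.comap_generateFrom]
    refine MeasurableSpace.generateFrom_le ?_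
    rintro t ⟨u, ⟨aval, rfl⟩, rfl⟩
    refine MeasurableSpace.measurableSet_generateFrom ?_
    refine ⟨{γ}, fun _ => aval, ?_⟩
    ext x
    simp [Set.Iic]
  · rintro t ⟨s, a, rfl⟩
    exact measurableSet_rect s a

end Part2

section Part3
open Set MeasureTheory

variable {Γ : Type*} [Group Γ] [Countable Γ] {μ : Measure (Γ → ℝ)} [IsProbabilityMeasure μ]

lemma shift_preimage_rect [DecidableEq Γ] (γ₀ : Γ) (s : Finset Γ) (a : Γ → ℝ) :
    (shift γ₀) ⁻¹' {x : Γ → ℝ | ∀ γ ∈ s, x γ ≤ a γ} =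
      {x : Γ → ℝ | ∀ δ ∈ s.image (fun γ => γ₀⁻¹ * γ), x δ ≤ a (γ₀ * δ)} := by
  ext x
  simp only [Set.mem_preimage, Set.mem_setOf_eq, Finset.mem_image]
  constructor
  · rintro h δ ⟨γ, hγ, rfl⟩
    have := h γ hγ
    rw [shift_apply] at this
    simpa [mul_inv_cancel_left] using this
  · intro h γ hγ
    rw [shift_apply]
    have := h (γ₀⁻¹ * γ) ⟨γ, hγ, rfl⟩
    simpa [mul_inv_cancel_left] using this

lemma map_shift (hμ : IsUniformProduct μ) (γ₀ : Γ) : Measure.map (shift γ₀) μ = μ := by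
  classical
  have hprob : IsProbabilityMeasure (Measure.map (shift γ₀) μ) :=
    Measure.isProbabilityMeasure_map (measurable_shift γ₀).aemeasurable
  refine ext_of_generate_finite (rectSet Γ) pi_eq_generateFrom_rectSet isPiSystem_rectSet ?_ ?_
  · rintro t ⟨s, a, rfl⟩
    rw [Measure.map_apply (measurable_shift γ₀) (measurableSet_rect s a),
      shift_preimage_rect, rect' hμ, rect' hμ]
    rw [Finset.prod_image (fun x _ y _ h => by
      have := congrArg (fun z => γ₀ * z) h
      simpa using this)]
    refine Finset.prod_congr rfl fun γ _ => ?_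
    simp [mul_inv_cancel_left]
  · simp [measure_univ]

lemma measure_preimage_shift (hμ : IsUniformProduct μ) (γ : Γ) {A : Set (Γ → ℝ)}
    (hA : MeasurableSet A) : μ ((shift γ) ⁻¹' A) = μ A := by
  conv_rhs => rw [← map_shift hμ γ]
  rw [Measure.map_apply (measurable_shift γ) hA]

end Part3

section Part4
open Set MeasureTheory SimpleGraph

lemma openConn_refl {V : Type*} (G : SimpleGraph V) {ω : V → Bool} {v : V}
    (h : ω v = true) : OpenConn G ω v v :=
  ⟨Walk.nil, by intro x hx; simp only [Walk.support_nil, List.mem_singleton] at hx; rw [hx]; exact h⟩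

lemma openConn_symm {V : Type*} {G : SimpleGraph V} {ω : V → Bool} {u v : V}
    (h : OpenConn G ω u v) : OpenConn G ω v u := by
  obtain ⟨w, hw⟩ := h
  exact ⟨w.reverse, fun x hx => hw x (by simpa [Walk.support_reverse, List.mem_reverse] using hx)⟩

lemma openConn_trans {V : Type*} {G : SimpleGraph V} {ω : V → Bool} {u v w : V}
    (h1 : OpenConn G ω u v) (h2 : OpenConn G ω v w) : OpenConn G ω u w := by
  obtain ⟨w1, hw1⟩ := h1; obtain ⟨w2, hw2⟩ := h2
  refine ⟨w1.append w2, fun x hx => ?_⟩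
  rcases (Walk.mem_support_append_iff _ _).mp hx with h | h
  exacts [hw1 x h, hw2 x h]

lemma openConn_end {V : Type*} {G : SimpleGraph V} {ω : V → Bool} {u v : V}
    (h : OpenConn G ω u v) : ω v = true := by
  obtain ⟨w, hw⟩ := h; exact hw v (Walk.end_mem_support w)

lemma openConn_start {V : Type*} {G : SimpleGraph V} {ω : V → Bool} {u v : V}
    (h : OpenConn G ω u v) : ω u = true := by
  obtain ⟨w, hw⟩ := h; exact hw u (Walk.start_mem_support w)

lemma inInf_of_openConn {V : Type*} {G : SimpleGraph V} {ω : V → Bool} {u v : V}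
    (h : InInfCluster G ω v) (hc : OpenConn G ω v u) : InInfCluster G ω u := by
  refine ⟨openConn_end hc, Set.Infinite.mono ?_ h.2⟩
  intro w hw
  exact openConn_trans (openConn_symm hc) hw

lemma cluster_eq_of_openConn {V : Type*} {G : SimpleGraph V} {ω : V → Bool} {v w : V}
    (h : OpenConn G ω v w) : {u | OpenConn G ω v u} = {u | OpenConn G ω w u} := by
  ext u
  exact ⟨fun hu => openConn_trans (openConn_symm h) hu, fun hu => openConn_trans h hu⟩

/-- Characterization of the uniqueness set. -/
lemma uset_iff {V : Type*} (G : SimpleGraph V) (ω : V → Bool) :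
    (∃! c, c ∈ InfClusters G ω) ↔
      (∃ v, InInfCluster G ω v) ∧
        ∀ v w, InInfCluster G ω v → InInfCluster G ω w → OpenConn G ω v w := by
  constructor
  · rintro ⟨c, ⟨v₀, hv₀, rfl⟩, huni⟩
    refine ⟨⟨v₀, hv₀⟩, fun v w hv hw => ?_⟩
    have h1 : {u | OpenConn G ω v u} = {u | OpenConn G ω v₀ u} :=
      huni {u | OpenConn G ω v u} ⟨v, hv, rfl⟩
    have h2 : {u | OpenConn G ω w u} = {u | OpenConn G ω v₀ u} :=
      huni {u | OpenConn G ω w u} ⟨w, hw, rfl⟩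
    have hwmem : w ∈ {u | OpenConn G ω w u} := openConn_refl G hw.1
    rw [h2, ← h1] at hwmem
    exact hwmem
  · rintro ⟨⟨v₀, hv₀⟩, hconn⟩
    refine ⟨{u | OpenConn G ω v₀ u}, ⟨v₀, hv₀, rfl⟩, ?_⟩
    rintro c' ⟨w, hw, rfl⟩
    exact (cluster_eq_of_openConn (hconn v₀ w hv₀ hw)).symm

section Cayley
variable {Γ : Type*} [Group Γ] {S : Finset Γ}

lemma cayley_adj {u v : Γ} :
    (cayleyGraph Γ (S : Set Γ)).Adj u v ↔ u ≠ v ∧ (u⁻¹ * v ∈ S ∨ v⁻¹ * u ∈ S) := by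
  simp [cayleyGraph, SimpleGraph.fromRel_adj]

lemma cayley_adj_translate (δ : Γ) {u v : Γ} (h : (cayleyGraph Γ (S : Set Γ)).Adj u v) :
    (cayleyGraph Γ (S : Set Γ)).Adj (δ * u) (δ * v) := by
  rw [cayley_adj] at h ⊢
  refine ⟨by simpa using h.1, ?_⟩
  simpa [mul_assoc, inv_mul_cancel_left, mul_inv_rev] using h.2

/-- Left translation as a graph homomorphism of the Cayley graph. -/
def cayleyHom (S : Finset Γ) (δ : Γ) :
    cayleyGraph Γ (S : Set Γ) →g cayleyGraph Γ (S : Set Γ) where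
  toFun := fun u => δ * u
  map_rel' := fun h => cayley_adj_translate δ h

lemma openConn_translate (δ : Γ) (ω : Γ → Bool) (u v : Γ) :
    OpenConn (cayleyGraph Γ (S : Set Γ)) (fun g => ω (δ * g)) u v ↔
      OpenConn (cayleyGraph Γ (S : Set Γ)) ω (δ * u) (δ * v) := by
  constructor
  · rintro ⟨w, hw⟩
    refine ⟨w.map (cayleyHom S δ), fun x hx => ?_⟩
    erw [Walk.support_map, List.mem_map] at hx
    obtain ⟨x₀, hx₀, rfl⟩ := hx
    exact hw x₀ hx₀
  · rintro ⟨w, hw⟩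
    refine ⟨(w.map (cayleyHom S δ⁻¹)).copy (inv_mul_cancel_left δ u) (inv_mul_cancel_left δ v),
      ?_⟩
    intro x hx
    erw [Walk.support_copy, Walk.support_map, List.mem_map] at hx
    obtain ⟨x₀, hx₀, rfl⟩ := hx
    have := hw x₀ hx₀
    show ω (δ * (δ⁻¹ * x₀)) = true
    simpa [mul_inv_cancel_left] using this

lemma infinite_preimage_mul_iff (δ : Γ) {C : Set Γ} :
    ((fun g => δ * g) ⁻¹' C).Infinite ↔ C.Infinite := by
  constructor
  · intro h
    have : C = (fun g => δ * g) '' ((fun g => δ * g) ⁻¹' C) := by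
      rw [Set.image_preimage_eq]
      exact fun g => ⟨δ⁻¹ * g, by simp⟩
    rw [this]
    exact h.image (Set.injOn_of_injective (fun a b hab => by simpa using hab))
  · intro h
    exact h.preimage (fun g _ => ⟨δ⁻¹ * g, by simp⟩)

lemma inInf_translate (δ : Γ) (ω : Γ → Bool) (u : Γ) :
    InInfCluster (cayleyGraph Γ (S : Set Γ)) (fun g => ω (δ * g)) u ↔
      InInfCluster (cayleyGraph Γ (S : Set Γ)) ω (δ * u) := by
  unfold InInfCluster
  have hset : {w | OpenConn (cayleyGraph Γ (S : Set Γ)) (fun g => ω (δ * g)) u w} =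
      (fun g => δ * g) ⁻¹' {w | OpenConn (cayleyGraph Γ (S : Set Γ)) ω (δ * u) w} := by
    ext w; exact openConn_translate δ ω u w
  rw [hset, infinite_preimage_mul_iff]

lemma config_shift (p : ℝ) (δ : Γ) (x : Γ → ℝ) :
    config p (shift δ⁻¹ x) = fun u => config p x (δ * u) := by
  funext u; simp [config, shift]

end Cayley
end Part4

section Part5
open Set MeasureTheory SimpleGraph

variable {Γ : Type*} [Group Γ] [Countable Γ]

/-- One open step of site percolation. -/
def rstep (S : Finset Γ) (p : ℝ) (x : Γ → ℝ) (a b : Γ) : Prop :=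
  (cayleyGraph Γ (S : Set Γ)).Adj a b ∧ config p x b = true

lemma walk_rtg {S : Finset Γ} {p : ℝ} {x : Γ → ℝ} :
    ∀ {v w : Γ} (wk : (cayleyGraph Γ (S : Set Γ)).Walk v w),
      (∀ u ∈ wk.support, config p x u = true) → Relation.ReflTransGen (rstep S p x) v w := by
  intro v w wk
  induction wk with
  | nil => intro _; exact Relation.ReflTransGen.refl
  | cons h q ih =>
    intro hopen
    refine Relation.ReflTransGen.head ⟨h, ?_⟩ (ih fun u hu => hopen u (by simp [hu]))
    exact hopen _ (by simp [q.start_mem_support])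

lemma openConn_iff_rtg (S : Finset Γ) (p : ℝ) (x : Γ → ℝ) (v w : Γ) :
    OpenConn (cayleyGraph Γ (S : Set Γ)) (config p x) v w ↔
      config p x v = true ∧ Relation.ReflTransGen (rstep S p x) v w := by
  constructor
  · rintro ⟨wk, hwk⟩
    exact ⟨hwk v wk.start_mem_support, walk_rtg wk hwk⟩
  · rintro ⟨hv, hr⟩
    induction hr with
    | refl => exact openConn_refl _ hv
    | tail h1 h2 ih =>
      refine openConn_trans ih ⟨Walk.cons h2.1 Walk.nil, ?_⟩
      intro u hu
      simp only [Walk.support_cons, Walk.support_nil, List.mem_cons, List.mem_singleton] at hu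
      rcases hu with rfl | hu
      · exact openConn_end ih
      · rcases hu with rfl | h; exacts [h2.2, absurd h (by simp)]

lemma measurableSet_chain (S : Finset Γ) (p : ℝ) (l : List Γ) :
    ∀ v : Γ, MeasurableSet {x : Γ → ℝ | List.Chain (rstep S p x) v l} := by
  induction l with
  | nil =>
    intro v
    have : {x : Γ → ℝ | List.Chain (rstep S p x) v []} = Set.univ :=
      Set.eq_univ_of_forall fun x => List.Chain.nil
    rw [this]; exact MeasurableSet.univ
  | cons b l ih =>
    intro v
    by_cases hadj : (cayleyGraph Γ (S : Set Γ)).Adj v b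
    · have : {x : Γ → ℝ | List.Chain (rstep S p x) v (b :: l)} =
          {x : Γ → ℝ | x b ≤ p} ∩ {x : Γ → ℝ | List.Chain (rstep S p x) b l} := by
        ext x
        simp [List.Chain, List.isChain_cons_cons, rstep, hadj, config]
      rw [this]
      exact (measurableSet_le (measurable_pi_apply b) measurable_const).inter (ih b)
    · have : {x : Γ → ℝ | List.Chain (rstep S p x) v (b :: l)} = ∅ := by
        ext x; simp [List.Chain, List.isChain_cons_cons, rstep, hadj]
      rw [this]; exact MeasurableSet.empty

lemma measurableSet_rtg (S : Finset Γ) (p : ℝ) (v w : Γ) :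
    MeasurableSet {x : Γ → ℝ | Relation.ReflTransGen (rstep S p x) v w} := by
  have : {x : Γ → ℝ | Relation.ReflTransGen (rstep S p x) v w} =
      ⋃ (l : List Γ), {x : Γ → ℝ | List.Chain (rstep S p x) v l ∧
        (v :: l).getLast (List.cons_ne_nil v l) = w} := by
    ext x
    simp only [Set.mem_setOf_eq, Set.mem_iUnion]
    constructor
    · intro h
      obtain ⟨l, hl, hlast⟩ := List.exists_isChain_cons_of_relationReflTransGen h
      exact ⟨l, hl, hlast⟩
    · rintro ⟨l, hl, hlast⟩
      exact List.relationReflTransGen_of_exists_isChain_cons l hl hlast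
  rw [this]
  refine MeasurableSet.iUnion fun l => ?_
  by_cases hlast : (v :: l).getLast (List.cons_ne_nil v l) = w
  · have : {x : Γ → ℝ | List.Chain (rstep S p x) v l ∧
        (v :: l).getLast (List.cons_ne_nil v l) = w} = {x : Γ → ℝ | List.Chain (rstep S p x) v l} := by
      ext x; simp [hlast]
    rw [this]; exact measurableSet_chain S p l v
  · have : {x : Γ → ℝ | List.Chain (rstep S p x) v l ∧
        (v :: l).getLast (List.cons_ne_nil v l) = w} = ∅ := by
      ext x; simp [hlast]
    rw [this]; exact MeasurableSet.empty

lemma measurableSet_openConn (S : Finset Γ) (p : ℝ) (v w : Γ) :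
    MeasurableSet {x : Γ → ℝ | OpenConn (cayleyGraph Γ (S : Set Γ)) (config p x) v w} := by
  have : {x : Γ → ℝ | OpenConn (cayleyGraph Γ (S : Set Γ)) (config p x) v w} =
      {x : Γ → ℝ | x v ≤ p} ∩ {x : Γ → ℝ | Relation.ReflTransGen (rstep S p x) v w} := by
    ext x
    rw [Set.mem_setOf_eq, openConn_iff_rtg]
    simp [config]
  rw [this]
  exact (measurableSet_le (measurable_pi_apply v) measurable_const).inter (measurableSet_rtg S p v w)

lemma set_infinite_iff_finset (s : Set Γ) : s.Infinite ↔ ∀ F : Finset Γ, ∃ u ∈ s, u ∉ F := by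
  constructor
  · intro h F
    by_contra hc
    push_neg at hc
    exact h (Set.Finite.subset F.finite_toSet (fun u hu => hc u hu))
  · intro h
    intro hfin
    obtain ⟨u, hu, hnot⟩ := h hfin.toFinset
    exact hnot (hfin.mem_toFinset.mpr hu)

lemma measurableSet_inInf (S : Finset Γ) (p : ℝ) (v : Γ) :
    MeasurableSet {x : Γ → ℝ | InInfCluster (cayleyGraph Γ (S : Set Γ)) (config p x) v} := by
  have : {x : Γ → ℝ | InInfCluster (cayleyGraph Γ (S : Set Γ)) (config p x) v} =
      {x : Γ → ℝ | x v ≤ p} ∩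
        ⋂ (F : Finset Γ), ⋃ (u : Γ) (_ : u ∉ F),
          {x : Γ → ℝ | OpenConn (cayleyGraph Γ (S : Set Γ)) (config p x) v u} := by
    ext x
    simp only [Set.mem_setOf_eq, InInfCluster, Set.mem_inter_iff, Set.mem_iInter, Set.mem_iUnion]
    rw [set_infinite_iff_finset, config]
    simp only [decide_eq_true_eq]
    constructor
    · rintro ⟨h1, h2⟩
      refine ⟨h1, fun F => ?_⟩
      obtain ⟨u, hu, hnot⟩ := h2 F
      exact ⟨u, hnot, hu⟩
    · rintro ⟨h1, h2⟩
      refine ⟨h1, fun F => ?_⟩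
      obtain ⟨u, hnot, hu⟩ := h2 F
      exact ⟨u, hu, hnot⟩
  rw [this]
  refine (measurableSet_le (measurable_pi_apply v) measurable_const).inter ?_
  exact MeasurableSet.iInter fun F => MeasurableSet.iUnion fun u =>
    MeasurableSet.iUnion fun _ => measurableSet_openConn S p v u

/-- The set of points whose configuration has a unique infinite cluster. -/
lemma measurableSet_uset (S : Finset Γ) (p : ℝ) :
    MeasurableSet {x : Γ → ℝ | ∃! c, c ∈ InfClusters (cayleyGraph Γ (S : Set Γ)) (config p x)} := by
  have : {x : Γ → ℝ | ∃! c, c ∈ InfClusters (cayleyGraph Γ (S : Set Γ)) (config p x)} =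
      (⋃ (v : Γ), {x : Γ → ℝ | InInfCluster (cayleyGraph Γ (S : Set Γ)) (config p x) v}) ∩
        ⋂ (v : Γ), ⋂ (w : Γ),
          (({x : Γ → ℝ | InInfCluster (cayleyGraph Γ (S : Set Γ)) (config p x) v} ∩
            {x : Γ → ℝ | InInfCluster (cayleyGraph Γ (S : Set Γ)) (config p x) w})ᶜ ∪
            {x : Γ → ℝ | OpenConn (cayleyGraph Γ (S : Set Γ)) (config p x) v w}) := by
    ext x
    rw [Set.mem_setOf_eq, uset_iff]
    simp only [Set.mem_inter_iff, Set.mem_iUnion, Set.mem_iInter, Set.mem_union, Set.mem_compl_iff,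
      Set.mem_setOf_eq, Set.mem_inter_iff]
    constructor
    · rintro ⟨h1, h2⟩
      refine ⟨h1, fun v w => ?_⟩
      by_cases hvw : InInfCluster (cayleyGraph Γ (S : Set Γ)) (config p x) v ∧
          InInfCluster (cayleyGraph Γ (S : Set Γ)) (config p x) w
      · exact Or.inr (h2 v w hvw.1 hvw.2)
      · exact Or.inl hvw
    · rintro ⟨h1, h2⟩
      refine ⟨h1, fun v w hv hw => ?_⟩
      rcases h2 v w with h | h
      · exact absurd ⟨hv, hw⟩ h
      · exact h
  rw [this]
  refine (MeasurableSet.iUnion fun v => measurableSet_inInf S p v).inter ?_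
  refine MeasurableSet.iInter fun v => MeasurableSet.iInter fun w => ?_
  exact (((measurableSet_inInf S p v).inter (measurableSet_inInf S p w)).compl).union
    (measurableSet_openConn S p v w)

end Part5

section Part6
open Set MeasureTheory SimpleGraph

variable {Γ : Type*} [Group Γ] [Countable Γ]

/-- Points in an infinite cluster (at the identity). -/
def ZS (S : Finset Γ) (p : ℝ) : Set (Γ → ℝ) :=
  {x | InInfCluster (cayleyGraph Γ (S : Set Γ)) (config p x) 1}

/-- Points with a unique infinite cluster. -/
def US (S : Finset Γ) (p : ℝ) : Set (Γ → ℝ) :=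
  {x | ∃! c, c ∈ InfClusters (cayleyGraph Γ (S : Set Γ)) (config p x)}

/-- The invariant good set. -/
def GS (S : Finset Γ) (p : ℝ) : Set (Γ → ℝ) := ⋂ (γ : Γ), (shift γ) ⁻¹' (US S p)

lemma mem_ZS_shift (S : Finset Γ) (p : ℝ) (δ : Γ) (x : Γ → ℝ) :
    shift δ⁻¹ x ∈ ZS S p ↔ InInfCluster (cayleyGraph Γ (S : Set Γ)) (config p x) δ := by
  show InInfCluster _ (config p (shift δ⁻¹ x)) 1 ↔ _
  rw [config_shift p δ x, inInf_translate δ (config p x) 1, mul_one]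

lemma GS_invariant {S : Finset Γ} {p : ℝ} {x : Γ → ℝ} (h : x ∈ GS S p) (γ : Γ) :
    shift γ x ∈ GS S p := by
  rw [GS, Set.mem_iInter] at h ⊢
  intro δ
  have := h (δ * γ)
  rw [Set.mem_preimage] at this ⊢
  rwa [shift_shift]

lemma GS_subset_US {S : Finset Γ} {p : ℝ} {x : Γ → ℝ} (h : x ∈ GS S p) : x ∈ US S p := by
  rw [GS, Set.mem_iInter] at h
  have := h 1
  rwa [Set.mem_preimage, shift_one] at this

/-- Attachment index sets. -/
def Wn (S : Finset Γ) (p : ℝ) (e : ℕ → Γ) (n : ℕ) : Set (Γ → ℝ) :=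
  {x | x ∈ GS S p ∧ x ∉ ZS S p ∧ shift (e n) x ∈ GS S p ∩ ZS S p ∧
    ∀ m < n, shift (e m) x ∉ GS S p ∩ ZS S p}

/-- Cayley edges inside the good infinite-cluster set. -/
def E1 (S : Finset Γ) (p : ℝ) (x y : Γ → ℝ) : Prop :=
  x ∈ GS S p ∩ ZS S p ∧ y ∈ GS S p ∩ ZS S p ∧ ∃ s ∈ S, y = shift s x

/-- Attaching edges. -/
def E2 (S : Finset Γ) (p : ℝ) (e : ℕ → Γ) (x y : Γ → ℝ) : Prop :=
  ∃ n, x ∈ Wn S p e n ∧ y = shift (e n) x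

/-- Edges on the null bad set. -/
def E3 (S : Finset Γ) (p : ℝ) (x y : Γ → ℝ) : Prop :=
  x ∉ GS S p ∧ y ∉ GS S p ∧ x ≠ y ∧ orbitRel Γ x y

/-- The full graphing of the orbit relation. -/
def EE (S : Finset Γ) (p : ℝ) (e : ℕ → Γ) (x y : Γ → ℝ) : Prop :=
  E1 S p x y ∨ E2 S p e x y ∨ E2 S p e y x ∨ E3 S p x y

lemma Wn_disjoint {S : Finset Γ} {p : ℝ} {e : ℕ → Γ} {x : Γ → ℝ} {n m : ℕ}
    (hn : x ∈ Wn S p e n) (hm : x ∈ Wn S p e m) : n = m := by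
  by_contra h
  rcases Nat.lt_or_ge n m with hlt | hge
  · exact hm.2.2.2 n hlt hn.2.2.1
  · exact hn.2.2.2 m (lt_of_le_of_ne hge (Ne.symm h)) hm.2.2.1

lemma orbitRel_symm {x y : Γ → ℝ} (h : orbitRel Γ x y) : orbitRel Γ y x := by
  obtain ⟨γ, rfl⟩ := h
  exact ⟨γ⁻¹, by rw [shift_shift, inv_mul_cancel, shift_one]⟩

lemma EE_symm {S : Finset Γ} {p : ℝ} {e : ℕ → Γ} (hS : ∀ s ∈ S, s⁻¹ ∈ S) :
    Symmetric (EE S p e) := by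
  rintro x y (⟨hx, hy, s, hs, rfl⟩ | h | h | ⟨h1, h2, h3, h4⟩)
  · refine Or.inl ⟨hy, hx, s⁻¹, hS s hs, ?_⟩
    rw [shift_shift, inv_mul_cancel, shift_one]
  · exact Or.inr (Or.inr (Or.inl h))
  · exact Or.inr (Or.inl h)
  · exact Or.inr (Or.inr (Or.inr ⟨h2, h1, Ne.symm h3, orbitRel_symm h4⟩))

lemma EE_sub {S : Finset Γ} {p : ℝ} {e : ℕ → Γ} {x y : Γ → ℝ} (h : EE S p e x y) :
    orbitRel Γ x y := by
  rcases h with ⟨_, _, s, _, rfl⟩ | ⟨n, _, rfl⟩ | ⟨n, _, hx⟩ | ⟨_, _, _, h⟩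
  · exact ⟨s, rfl⟩
  · exact ⟨e n, rfl⟩
  · exact ⟨(e n)⁻¹, by rw [hx, shift_shift, inv_mul_cancel, shift_one]⟩
  · exact h

/-- Walking along an open path in the Cayley graph produces `E1`-paths. -/
lemma walk_to_E1 {S : Finset Γ} {p : ℝ} (hS : ∀ s ∈ S, s⁻¹ ∈ S) {x : Γ → ℝ}
    (hxG : x ∈ GS S p)
    (hx1 : InInfCluster (cayleyGraph Γ (S : Set Γ)) (config p x) 1) :
    ∀ {a b : Γ} (wk : (cayleyGraph Γ (S : Set Γ)).Walk a b),
      (∀ u ∈ wk.support, config p x u = true) →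
      OpenConn (cayleyGraph Γ (S : Set Γ)) (config p x) 1 a →
      Relation.ReflTransGen (E1 S p) (shift a⁻¹ x) (shift b⁻¹ x) := by
  intro a b wk
  induction wk with
  | nil => intro _ _; exact Relation.ReflTransGen.refl
  | @cons a c b h q ih =>
    intro hopen hconn
    have hwc : config p x c = true := hopen c (by simp [q.start_mem_support])
    have hconn_c : OpenConn (cayleyGraph Γ (S : Set Γ)) (config p x) 1 c := by
      refine openConn_trans hconn ⟨Walk.cons h Walk.nil, ?_⟩
      intro u hu
      simp only [Walk.support_cons, Walk.support_nil, List.mem_cons, List.mem_singleton] at hu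
      rcases hu with rfl | hu
      · exact openConn_end hconn
      · rcases hu with rfl | h'; exacts [hwc, absurd h' (by simp)]
    have hstep : E1 S p (shift a⁻¹ x) (shift c⁻¹ x) := by
      refine ⟨⟨GS_invariant hxG a⁻¹, ?_⟩, ⟨GS_invariant hxG c⁻¹, ?_⟩, ?_⟩
      · rw [mem_ZS_shift]
        exact inInf_of_openConn hx1 hconn
      · rw [mem_ZS_shift]
        exact inInf_of_openConn hx1 hconn_c
      · refine ⟨c⁻¹ * a, ?_, ?_⟩
        · rcases (cayley_adj.mp h).2 with hs | hs
          · have := hS _ hs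
            rwa [mul_inv_rev, inv_inv] at this
          · exact hs
        · rw [shift_shift, mul_assoc, mul_inv_cancel, mul_one]
    exact Relation.ReflTransGen.head hstep (ih (fun u hu => hopen u (by simp [hu])) hconn_c)

/-- Two good points in infinite clusters in the same orbit are `E1`-connected. -/
lemma connects {S : Finset Γ} {p : ℝ} (hS : ∀ s ∈ S, s⁻¹ ∈ S) {x : Γ → ℝ} {γ : Γ}
    (hxG : x ∈ GS S p) (hxZ : x ∈ ZS S p) (hyZ : shift γ x ∈ ZS S p) :
    Relation.ReflTransGen (E1 S p) x (shift γ x) := by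
  have hx1 : InInfCluster (cayleyGraph Γ (S : Set Γ)) (config p x) 1 := hxZ
  have hy : InInfCluster (cayleyGraph Γ (S : Set Γ)) (config p x) γ⁻¹ := by
    rw [← mem_ZS_shift, inv_inv]
    exact hyZ
  have hconn : OpenConn (cayleyGraph Γ (S : Set Γ)) (config p x) 1 γ⁻¹ :=
    ((uset_iff _ _).mp (GS_subset_US hxG)).2 1 γ⁻¹ hx1 hy
  obtain ⟨wk, hwk⟩ := hconn
  have := walk_to_E1 hS hxG hx1 wk hwk (openConn_refl _ (hwk 1 wk.start_mem_support))
  rwa [inv_one, shift_one, inv_inv] at this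

/-- Every good point not in `Z` can be attached. -/
lemma attach {S : Finset Γ} {p : ℝ} {e : ℕ → Γ} (he : Function.Surjective e) {x : Γ → ℝ}
    (hxG : x ∈ GS S p) (hxZ : x ∉ ZS S p) : ∃ n, x ∈ Wn S p e n := by
  classical
  obtain ⟨⟨v, hv⟩, -⟩ := (uset_iff _ _).mp (GS_subset_US hxG)
  obtain ⟨n₀, hn₀⟩ := he v⁻¹
  have hex : ∃ n, shift (e n) x ∈ GS S p ∩ ZS S p := by
    refine ⟨n₀, ⟨GS_invariant hxG _, ?_⟩⟩
    rw [hn₀, ← inv_inv v, mem_ZS_shift] at *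
    · exact hv
  refine ⟨Nat.find hex, hxG, hxZ, Nat.find_spec hex, fun m hm => Nat.find_min hex hm⟩

/-- the spanning property. -/
lemma EE_spans {S : Finset Γ} {p : ℝ} {e : ℕ → Γ} (hS : ∀ s ∈ S, s⁻¹ ∈ S)
    (he : Function.Surjective e) {x y : Γ → ℝ} (h : orbitRel Γ x y) :
    Relation.ReflTransGen (EE S p e) x y := by
  classical
  obtain ⟨γ, rfl⟩ := h
  by_cases hxG : x ∈ GS S p
  · -- both in the good set
    have key : ∀ z : Γ → ℝ, z ∈ GS S p → ∃ z' : Γ → ℝ,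
        Relation.ReflTransGen (EE S p e) z z' ∧ z' ∈ GS S p ∩ ZS S p ∧
          ∃ α : Γ, z' = shift α z := by
      intro z hz
      by_cases hzZ : z ∈ ZS S p
      · exact ⟨z, Relation.ReflTransGen.refl, ⟨hz, hzZ⟩, 1, (shift_one z).symm⟩
      · obtain ⟨n, hn⟩ := attach he hz hzZ
        exact ⟨shift (e n) z, Relation.ReflTransGen.single (Or.inr (Or.inl ⟨n, hn, rfl⟩)),
          hn.2.2.1, e n, rfl⟩
    obtain ⟨x', hx'path, hx'mem, α, rfl⟩ := key x hxG
    obtain ⟨y', hy'path, hy'mem, β, hy'⟩ := key (shift γ x) (GS_invariant hxG γ)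
    rw [shift_shift] at hy'
    -- y' = shift (β * γ) x = shift (β * γ * α⁻¹) x'
    have hy'' : y' = shift (β * γ * α⁻¹) (shift α x) := by
      rw [shift_shift, inv_mul_cancel_right, hy']
    have hconn : Relation.ReflTransGen (E1 S p) (shift α x) (shift (β * γ * α⁻¹) (shift α x)) :=
      connects hS hx'mem.1 hx'mem.2 (by rw [← hy'']; exact hy'mem.2)
    have hmid : Relation.ReflTransGen (EE S p e) (shift α x) y' := by
      rw [hy'']
      exact Relation.ReflTransGen.mono (fun a b hab => Or.inl hab) _ _ hconn
    have hback : Relation.ReflTransGen (EE S p e) y' (shift γ x) :=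
      (@Relation.ReflTransGen.stdSymm _ _ ⟨EE_symm hS⟩).symm _ _ hy'path
    exact (hx'path.trans hmid).trans hback
  · -- bad orbit
    have hyG : shift γ x ∉ GS S p := by
      intro hy
      exact hxG (by
        have := GS_invariant hy γ⁻¹
        rwa [shift_shift, inv_mul_cancel, shift_one] at this)
    by_cases hxy : x = shift γ x
    · rw [← hxy]
    · exact Relation.ReflTransGen.single
        (Or.inr (Or.inr (Or.inr ⟨hxG, hyG, hxy, ⟨γ, rfl⟩⟩)))

end Part6

section Part7
open Set MeasureTheory SimpleGraph

variable {Γ : Type*} [Group Γ] [Countable Γ]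

lemma measurableSet_eqset : MeasurableSet {q : (Γ → ℝ) × (Γ → ℝ) | q.1 = q.2} := by
  have : {q : (Γ → ℝ) × (Γ → ℝ) | q.1 = q.2} =
      ⋂ (δ : Γ), {q : (Γ → ℝ) × (Γ → ℝ) | q.1 δ = q.2 δ} := by
    ext q
    simp only [Set.mem_iInter, Set.mem_setOf_eq]
    exact ⟨fun h δ => by rw [h], fun h => funext h⟩
  rw [this]
  exact MeasurableSet.iInter fun δ => measurableSet_eq_fun
    (measurable_fst.eval) (measurable_snd.eval)

lemma measurableSet_graphShift (γ : Γ) :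
    MeasurableSet {q : (Γ → ℝ) × (Γ → ℝ) | q.2 = shift γ q.1} := by
  have : {q : (Γ → ℝ) × (Γ → ℝ) | q.2 = shift γ q.1} =
      ⋂ (δ : Γ), {q : (Γ → ℝ) × (Γ → ℝ) | q.2 δ = q.1 (γ⁻¹ * δ)} := by
    ext q
    simp only [Set.mem_iInter, Set.mem_setOf_eq]
    exact ⟨fun h δ => by rw [h]; rfl, fun h => funext h⟩
  rw [this]
  exact MeasurableSet.iInter fun δ => measurableSet_eq_fun
    (measurable_snd.eval) (measurable_fst.eval)

lemma measurableSet_ZS (S : Finset Γ) (p : ℝ) : MeasurableSet (ZS S p) :=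
  measurableSet_inInf S p 1

lemma measurableSet_US (S : Finset Γ) (p : ℝ) : MeasurableSet (US S p) :=
  measurableSet_uset S p

lemma measurableSet_GS (S : Finset Γ) (p : ℝ) : MeasurableSet (GS S p) :=
  MeasurableSet.iInter fun γ => measurable_shift γ (measurableSet_US S p)

lemma measurableSet_Wn (S : Finset Γ) (p : ℝ) (e : ℕ → Γ) (n : ℕ) :
    MeasurableSet (Wn S p e n) := by
  have : Wn S p e n = (GS S p) ∩ (ZS S p)ᶜ ∩ (shift (e n)) ⁻¹' (GS S p ∩ ZS S p) ∩
      ⋂ (m : ℕ) (_ : m < n), ((shift (e m)) ⁻¹' (GS S p ∩ ZS S p))ᶜ := by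
    ext x
    simp only [Wn, Set.mem_setOf_eq, Set.mem_inter_iff, Set.mem_compl_iff, Set.mem_preimage,
      Set.mem_iInter]
    tauto
  rw [this]
  exact (((measurableSet_GS S p).inter (measurableSet_ZS S p).compl).inter
      (measurable_shift (e n) ((measurableSet_GS S p).inter (measurableSet_ZS S p)))).inter
    (MeasurableSet.iInter fun m => MeasurableSet.iInter fun _ =>
      (measurable_shift (e m) ((measurableSet_GS S p).inter (measurableSet_ZS S p))).compl)

lemma measurableSet_E2set (S : Finset Γ) (p : ℝ) (e : ℕ → Γ) :
    MeasurableSet {q : (Γ → ℝ) × (Γ → ℝ) | E2 S p e q.1 q.2} := by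
  have : {q : (Γ → ℝ) × (Γ → ℝ) | E2 S p e q.1 q.2} =
      ⋃ (n : ℕ), ((Wn S p e n) ×ˢ (Set.univ : Set (Γ → ℝ))) ∩
        {q : (Γ → ℝ) × (Γ → ℝ) | q.2 = shift (e n) q.1} := by
    ext q
    simp only [E2, Set.mem_setOf_eq, Set.mem_iUnion, Set.mem_inter_iff, Set.mem_prod,
      Set.mem_univ, and_true]
  rw [this]
  exact MeasurableSet.iUnion fun n =>
    ((measurableSet_Wn S p e n).prod MeasurableSet.univ).inter (measurableSet_graphShift (e n))

lemma measurableSet_EE (S : Finset Γ) (p : ℝ) (e : ℕ → Γ) :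
    MeasurableSet {q : (Γ → ℝ) × (Γ → ℝ) | EE S p e q.1 q.2} := by
  have hA : MeasurableSet (GS S p ∩ ZS S p) :=
    (measurableSet_GS S p).inter (measurableSet_ZS S p)
  have hE1 : MeasurableSet {q : (Γ → ℝ) × (Γ → ℝ) | E1 S p q.1 q.2} := by
    have : {q : (Γ → ℝ) × (Γ → ℝ) | E1 S p q.1 q.2} =
        ⋃ (s : Γ) (_ : s ∈ S), (((GS S p ∩ ZS S p)) ×ˢ ((GS S p ∩ ZS S p))) ∩
          {q : (Γ → ℝ) × (Γ → ℝ) | q.2 = shift s q.1} := by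
      ext q
      simp only [E1, Set.mem_setOf_eq, Set.mem_iUnion, Set.mem_inter_iff, Set.mem_prod]
      tauto
    rw [this]
    exact MeasurableSet.iUnion fun s => MeasurableSet.iUnion fun _ =>
      (hA.prod hA).inter (measurableSet_graphShift s)
  have hE2 := measurableSet_E2set S p e
  have hE2' : MeasurableSet {q : (Γ → ℝ) × (Γ → ℝ) | E2 S p e q.2 q.1} := by
    have : {q : (Γ → ℝ) × (Γ → ℝ) | E2 S p e q.2 q.1} =
        Prod.swap ⁻¹' {q : (Γ → ℝ) × (Γ → ℝ) | E2 S p e q.1 q.2} := rfl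
    rw [this]
    exact measurable_swap hE2
  have hE3 : MeasurableSet {q : (Γ → ℝ) × (Γ → ℝ) | E3 S p q.1 q.2} := by
    have : {q : (Γ → ℝ) × (Γ → ℝ) | E3 S p q.1 q.2} =
        (((GS S p)ᶜ) ×ˢ ((GS S p)ᶜ)) ∩ ({q : (Γ → ℝ) × (Γ → ℝ) | q.1 = q.2})ᶜ ∩
          ⋃ (γ : Γ), {q : (Γ → ℝ) × (Γ → ℝ) | q.2 = shift γ q.1} := by
      ext q
      simp only [E3, orbitRel, Set.mem_setOf_eq, Set.mem_inter_iff, Set.mem_prod,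
        Set.mem_compl_iff, Set.mem_iUnion]
      tauto
    rw [this]
    exact (((measurableSet_GS S p).compl.prod (measurableSet_GS S p).compl).inter
      measurableSet_eqset.compl).inter (MeasurableSet.iUnion fun γ => measurableSet_graphShift γ)
  have : {q : (Γ → ℝ) × (Γ → ℝ) | EE S p e q.1 q.2} =
      {q : (Γ → ℝ) × (Γ → ℝ) | E1 S p q.1 q.2} ∪ {q | E2 S p e q.1 q.2} ∪
        {q | E2 S p e q.2 q.1} ∪ {q | E3 S p q.1 q.2} := by
    ext q
    simp only [EE, Set.mem_union, Set.mem_setOf_eq]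
    tauto
  rw [this]
  exact ((hE1.union hE2).union hE2').union hE3

end Part7

section Part8
open Set MeasureTheory
open scoped ENNReal

lemma coe_encard_union_le {α : Type*} (T1 T2 : Set α) :
    (((T1 ∪ T2).encard : ℕ∞) : ℝ≥0∞) ≤ ((T1.encard : ℕ∞) : ℝ≥0∞) + ((T2.encard : ℕ∞) : ℝ≥0∞) := by
  rw [← ENat.toENNReal_add]
  exact ENat.toENNReal_le.mpr (Set.encard_union_le _ _)

lemma encard_le_tsum_indicator (C : Set ℕ) :
    ((C.encard : ℕ∞) : ℝ≥0∞) ≤ ∑' n, C.indicator (fun _ => (1 : ℝ≥0∞)) n := by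
  classical
  rcases C.finite_or_infinite with hC | hC
  · have hcoe : ((C.encard : ℕ∞) : ℝ≥0∞) = (hC.toFinset.card : ℝ≥0∞) := by
      rw [hC.encard_eq_coe_toFinset_card]
      exact ENat.toENNReal_coe _
    rw [hcoe]
    have hsum : ((hC.toFinset.card : ℝ≥0∞)) =
        ∑ n ∈ hC.toFinset, C.indicator (fun _ => (1 : ℝ≥0∞)) n := by
      rw [Finset.sum_congr rfl (fun n hn => Set.indicator_of_mem (hC.mem_toFinset.mp hn) _),
        Finset.sum_const, nsmul_eq_mul, mul_one]
    rw [hsum]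
    exact ENNReal.sum_le_tsum _
  · have h1 : ∀ k : ℕ, (k : ℝ≥0∞) ≤ ∑' n, C.indicator (fun _ => (1 : ℝ≥0∞)) n := by
      intro k
      obtain ⟨F, hF, hcard⟩ := hC.exists_subset_card_eq k
      have hsum : ((k : ℝ≥0∞)) = ∑ n ∈ F, C.indicator (fun _ => (1 : ℝ≥0∞)) n := by
        rw [Finset.sum_congr rfl
            (fun n hn => Set.indicator_of_mem (hF (Finset.mem_coe.mpr hn)) _),
          Finset.sum_const, nsmul_eq_mul, mul_one, hcard]
      rw [hsum]
      exact ENNReal.sum_le_tsum _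
    have htop : ∑' n, C.indicator (fun _ => (1 : ℝ≥0∞)) n = ⊤ := by
      by_contra h
      obtain ⟨k, hk⟩ := ENNReal.exists_nat_gt h
      exact absurd (h1 k) (not_le.mpr hk)
    rw [htop]; exact le_top

lemma card_ge_two {Γ : Type*} [Group Γ] [Infinite Γ] {S : Finset Γ}
    (hS : ∀ s ∈ S, s⁻¹ ∈ S) (hgen : Subgroup.closure (S : Set Γ) = ⊤) : 2 ≤ S.card := by
  by_contra h
  push_neg at h
  rcases Nat.le_one_iff_eq_zero_or_eq_one.mp (Nat.lt_succ_iff.mp h) with h0 | h1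
  · rw [Finset.card_eq_zero] at h0
    subst h0
    rw [Finset.coe_empty, Subgroup.closure_empty] at hgen
    obtain ⟨x, y, hxy⟩ := exists_pair_ne Γ
    have hx : x ∈ (⊥ : Subgroup Γ) := hgen ▸ Subgroup.mem_top x
    have hy : y ∈ (⊥ : Subgroup Γ) := hgen ▸ Subgroup.mem_top y
    rw [Subgroup.mem_bot] at hx hy
    exact hxy (hx.trans hy.symm)
  · obtain ⟨t, rfl⟩ := Finset.card_eq_one.mp h1
    have ht_inv : t⁻¹ = t := by
      have := hS t (Finset.mem_singleton_self t)
      rwa [Finset.mem_singleton] at this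
    rw [Finset.coe_singleton] at hgen
    have hP : ∀ x : Γ, x = 1 ∨ x = t := by
      intro x
      have hx : x ∈ Subgroup.closure ({t} : Set Γ) := hgen ▸ Subgroup.mem_top x
      refine Subgroup.closure_induction ?_ ?_ ?_ ?_ hx
      · rintro y hy
        rw [Set.mem_singleton_iff] at hy
        exact Or.inr hy
      · exact Or.inl rfl
      · have hsq : t * t = 1 := by nth_rewrite 2 [← ht_inv]; exact mul_inv_cancel t
        rintro y z _ _ hy hz
        rcases hy with h1' | h1' <;> rcases hz with h2' | h2' <;> rw [h1', h2'] <;> simp [hsq]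
      · rintro y _ hy
        rcases hy with h' | h' <;> rw [h'] <;> simp [ht_inv]
    have hfin : (Set.univ : Set Γ).Finite := by
      refine Set.Finite.subset (Set.toFinite ({1, t} : Set Γ)) ?_
      intro x _
      rcases hP x with rfl | rfl
      · exact Set.mem_insert _ _
      · exact Set.mem_insert_iff.mpr (Or.inr rfl)
    exact Set.infinite_univ hfin

end Part8


/-- If Bernoulli(p) site percolation on the Cayley graph has a unique infinite cluster
almost surely, then the cost of the Bernoulli action is at most `1 + θ(p)(|S| - 1)`. -/
theorem stmt12 {Γ : Type*} [Group Γ] [Countable Γ] [Infinite Γ] (S : Finset Γ)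
    (hS : ∀ s ∈ S, s⁻¹ ∈ S) (hgen : Subgroup.closure (S : Set Γ) = ⊤)
    (μ : Measure (Γ → ℝ)) [IsProbabilityMeasure μ] (hμ : IsUniformProduct μ)
    (p : ℝ) (hp : p ∈ Set.Icc (0:ℝ) 1)
    (huniq : μ {x | ∃! c, c ∈ InfClusters (cayleyGraph Γ (S : Set Γ)) (config p x)} = 1) :
    relCost (Γ → ℝ) μ (orbitRel Γ) ≤
      1 + μ {x | InInfCluster (cayleyGraph Γ (S : Set Γ)) (config p x) 1}
            * ((S.card : ℝ≥0∞) - 1) := by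
  classical
  obtain ⟨e, he⟩ := exists_surjective_nat Γ
  have hcard2 : 2 ≤ S.card := card_ge_two hS hgen
  -- the graphing
  let g : Graphing (Γ → ℝ) μ (orbitRel Γ) :=
    { E := EE S p e
      symm := fun x y h => EE_symm hS h
      sub := fun _ _ h => EE_sub h
      spans := fun _ _ h => EE_spans hS he h
      meas := measurableSet_EE S p e }
  have hle : relCost (Γ → ℝ) μ (orbitRel Γ) ≤ g.cost := iInf_le _ g
  refine le_trans hle ?_
  have hcost : g.cost = (1/2) * ∫⁻ x, (({y | EE S p e x y}.encard : ℕ∞) : ℝ≥0∞) ∂μ := rfl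
  rw [hcost]
  -- notation
  set A : Set (Γ → ℝ) := GS S p ∩ ZS S p with hA
  have hAmeas : MeasurableSet A := (measurableSet_GS S p).inter (measurableSet_ZS S p)
  set B : ℕ → Set (Γ → ℝ) := fun n => (shift ((e n)⁻¹)) ⁻¹' (Wn S p e n) with hB
  have hBmeas : ∀ n, MeasurableSet (B n) := fun n =>
    measurable_shift _ (measurableSet_Wn S p e n)
  set Wu : Set (Γ → ℝ) := ⋃ n, Wn S p e n with hWu
  have hWumeas : MeasurableSet Wu := MeasurableSet.iUnion fun n => measurableSet_Wn S p e n
  -- the dominating function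
  set f1 : (Γ → ℝ) → ℝ≥0∞ := A.indicator (fun _ => (S.card : ℝ≥0∞)) with hf1
  set f2 : (Γ → ℝ) → ℝ≥0∞ := Wu.indicator (fun _ => (1 : ℝ≥0∞)) with hf2
  set f3 : (Γ → ℝ) → ℝ≥0∞ := fun x => ∑' n, (B n).indicator (fun _ => (1 : ℝ≥0∞)) x with hf3
  set f4 : (Γ → ℝ) → ℝ≥0∞ := ((GS S p)ᶜ).indicator (fun _ => (⊤ : ℝ≥0∞)) with hf4
  have hf1meas : Measurable f1 := measurable_const.indicator hAmeas
  have hf2meas : Measurable f2 := measurable_const.indicator hWumeas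
  have hf3meas : Measurable f3 :=
    Measurable.ennreal_tsum fun n => measurable_const.indicator (hBmeas n)
  have hf4meas : Measurable f4 := measurable_const.indicator (measurableSet_GS S p).compl
  -- degree bound
  have hdeg : ∀ x : Γ → ℝ, (({y | EE S p e x y}.encard : ℕ∞) : ℝ≥0∞) ≤
      f1 x + f2 x + f3 x + f4 x := by
    intro x
    have hsub : {y | EE S p e x y} ⊆
        ({y | E1 S p x y} ∪ {y | E2 S p e x y}) ∪ ({y | E2 S p e y x} ∪ {y | E3 S p x y}) := by
      intro y hy
      rcases hy with h | h | h | h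
      · exact Or.inl (Or.inl h)
      · exact Or.inl (Or.inr h)
      · exact Or.inr (Or.inl h)
      · exact Or.inr (Or.inr h)
    have b1 : (({y | E1 S p x y}.encard : ℕ∞) : ℝ≥0∞) ≤ f1 x := by
      by_cases hxA : x ∈ A
      · have hsub1 : {y | E1 S p x y} ⊆ (fun s : Γ => shift s x) '' (S : Set Γ) := by
          rintro y ⟨_, _, s, hs, rfl⟩
          exact ⟨s, hs, rfl⟩
        calc (({y | E1 S p x y}.encard : ℕ∞) : ℝ≥0∞)
            ≤ ((((fun s : Γ => shift s x) '' (S : Set Γ)).encard : ℕ∞) : ℝ≥0∞) :=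
              ENat.toENNReal_le.mpr (Set.encard_mono hsub1)
          _ ≤ (((S : Set Γ).encard : ℕ∞) : ℝ≥0∞) :=
              ENat.toENNReal_le.mpr (Set.encard_image_le _ _)
          _ = (S.card : ℝ≥0∞) := by
              rw [Set.encard_coe_eq_coe_finsetCard]; exact ENat.toENNReal_coe _
          _ = f1 x := by rw [hf1, Set.indicator_of_mem hxA]
      · have hempty : {y | E1 S p x y} = ∅ := by
          ext y
          simp only [Set.mem_setOf_eq, Set.mem_empty_iff_false, iff_false]
          rintro ⟨h1, -, -⟩
          exact hxA h1
        rw [hempty]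
        simp
    have b2 : (({y | E2 S p e x y}.encard : ℕ∞) : ℝ≥0∞) ≤ f2 x := by
      by_cases hxW : x ∈ Wu
      · obtain ⟨n₀, hn₀⟩ := Set.mem_iUnion.mp hxW
        have hsub2 : {y | E2 S p e x y} ⊆ {shift (e n₀) x} := by
          rintro y ⟨n, hn, rfl⟩
          rw [Set.mem_singleton_iff, Wn_disjoint hn hn₀]
        calc (({y | E2 S p e x y}.encard : ℕ∞) : ℝ≥0∞)
            ≤ ((({shift (e n₀) x} : Set (Γ → ℝ)).encard : ℕ∞) : ℝ≥0∞) :=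
              ENat.toENNReal_le.mpr (Set.encard_mono hsub2)
          _ = 1 := by rw [Set.encard_singleton]; simp
          _ = f2 x := by rw [hf2, Set.indicator_of_mem hxW]
      · have hempty : {y | E2 S p e x y} = ∅ := by
          ext y
          simp only [Set.mem_setOf_eq, Set.mem_empty_iff_false, iff_false]
          rintro ⟨n, hn, -⟩
          exact hxW (Set.mem_iUnion.mpr ⟨n, hn⟩)
        rw [hempty]
        simp
    have b3 : (({y | E2 S p e y x}.encard : ℕ∞) : ℝ≥0∞) ≤ f3 x := by
      have hsub3 : {y | E2 S p e y x} ⊆ (fun n => shift ((e n)⁻¹) x) '' {n : ℕ | x ∈ B n} := by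
        rintro y ⟨n, hyW, hxeq⟩
        have hy' : y = shift ((e n)⁻¹) x := by
          rw [hxeq, shift_shift, inv_mul_cancel, shift_one]
        refine ⟨n, ?_, hy'.symm⟩
        show x ∈ B n
        rw [hB]
        show shift ((e n)⁻¹) x ∈ Wn S p e n
        rw [← hy']
        exact hyW
      calc (({y | E2 S p e y x}.encard : ℕ∞) : ℝ≥0∞)
          ≤ ((((fun n => shift ((e n)⁻¹) x) '' {n : ℕ | x ∈ B n}).encard : ℕ∞) : ℝ≥0∞) :=
            ENat.toENNReal_le.mpr (Set.encard_mono hsub3)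
        _ ≤ (({n : ℕ | x ∈ B n}.encard : ℕ∞) : ℝ≥0∞) :=
            ENat.toENNReal_le.mpr (Set.encard_image_le _ _)
        _ ≤ ∑' n, ({n : ℕ | x ∈ B n}).indicator (fun _ => (1 : ℝ≥0∞)) n :=
            encard_le_tsum_indicator _
        _ = f3 x := by
            refine tsum_congr fun n => ?_
            by_cases hxB : x ∈ B n
            · rw [Set.indicator_of_mem hxB, Set.indicator_of_mem (show n ∈ {n : ℕ | x ∈ B n}
                from hxB)]
            · rw [Set.indicator_of_notMem hxB,
                Set.indicator_of_notMem (show n ∉ {n : ℕ | x ∈ B n} from hxB)]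
    have b4 : (({y | E3 S p x y}.encard : ℕ∞) : ℝ≥0∞) ≤ f4 x := by
      by_cases hxG : x ∈ GS S p
      · have hempty : {y | E3 S p x y} = ∅ := by
          ext y
          simp only [Set.mem_setOf_eq, Set.mem_empty_iff_false, iff_false]
          rintro ⟨h1, -, -, -⟩
          exact h1 hxG
        rw [hempty]
        simp
      · rw [hf4, Set.indicator_of_mem (Set.mem_compl hxG)]
        exact le_top
    calc (({y | EE S p e x y}.encard : ℕ∞) : ℝ≥0∞)
        ≤ (((({y | E1 S p x y} ∪ {y | E2 S p e x y}) ∪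
            ({y | E2 S p e y x} ∪ {y | E3 S p x y})).encard : ℕ∞) : ℝ≥0∞) :=
          ENat.toENNReal_le.mpr (Set.encard_mono hsub)
      _ ≤ ((({y | E1 S p x y} ∪ {y | E2 S p e x y}).encard : ℕ∞) : ℝ≥0∞) +
            ((({y | E2 S p e y x} ∪ {y | E3 S p x y}).encard : ℕ∞) : ℝ≥0∞) :=
          coe_encard_union_le _ _
      _ ≤ ((({y | E1 S p x y}.encard : ℕ∞) : ℝ≥0∞) + (({y | E2 S p e x y}.encard : ℕ∞) : ℝ≥0∞)) +
            ((({y | E2 S p e y x}.encard : ℕ∞) : ℝ≥0∞) + (({y | E3 S p x y}.encard : ℕ∞) : ℝ≥0∞)) :=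
          add_le_add (coe_encard_union_le _ _) (coe_encard_union_le _ _)
      _ ≤ (f1 x + f2 x) + (f3 x + f4 x) := add_le_add (add_le_add b1 b2) (add_le_add b3 b4)
      _ = f1 x + f2 x + f3 x + f4 x := by ring
  -- integral computation
  have hGSnull : μ ((GS S p)ᶜ) = 0 := by
    have hUS : μ (US S p) = 1 := huniq
    have hUSc : μ ((US S p)ᶜ) = 0 := by
      rw [measure_compl (measurableSet_US S p) (measure_ne_top μ _), hUS, measure_univ, tsub_self]
    have hGSc : (GS S p)ᶜ = ⋃ (γ : Γ), (shift γ) ⁻¹' ((US S p)ᶜ) := by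
      rw [GS, Set.compl_iInter]
      exact Set.iUnion_congr fun γ => rfl
    rw [hGSc]
    exact measure_iUnion_null fun γ => by
      rw [measure_preimage_shift hμ γ (measurableSet_US S p).compl]
      exact hUSc
  have hBW : ∀ n, μ (B n) = μ (Wn S p e n) := fun n =>
    measure_preimage_shift hμ _ (measurableSet_Wn S p e n)
  have hdisj : Pairwise (Function.onFun Disjoint (Wn S p e)) := by
    intro n m hnm
    exact Set.disjoint_left.mpr fun x hx hx' => hnm (Wn_disjoint hx hx')
  have hsumWn : (∑' n, μ (Wn S p e n)) = μ Wu :=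
    (measure_iUnion hdisj fun n => measurableSet_Wn S p e n).symm
  have hint : ∫⁻ x, (f1 x + f2 x + f3 x + f4 x) ∂μ =
      (S.card : ℝ≥0∞) * μ A + μ Wu + μ Wu := by
    rw [lintegral_add_left (f := fun x => f1 x + f2 x + f3 x) ((hf1meas.add hf2meas).add hf3meas),
      lintegral_add_left (f := fun x => f1 x + f2 x) (hf1meas.add hf2meas), lintegral_add_left hf1meas]
    have e1 : ∫⁻ x, f1 x ∂μ = (S.card : ℝ≥0∞) * μ A := lintegral_indicator_const hAmeas _
    have e2 : ∫⁻ x, f2 x ∂μ = μ Wu := lintegral_indicator_one hWumeas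
    have e3 : ∫⁻ x, f3 x ∂μ = μ Wu := by
      rw [hf3, lintegral_tsum fun n => (measurable_const.indicator (hBmeas n)).aemeasurable]
      rw [← hsumWn]
      exact tsum_congr fun n => by rw [lintegral_indicator_const (hBmeas n) 1, one_mul, hBW n]
    have e4 : ∫⁻ x, f4 x ∂μ = 0 := by
      rw [hf4, lintegral_indicator_const (measurableSet_GS S p).compl, hGSnull, mul_zero]
    rw [e1, e2, e3, e4, add_zero]
  -- final arithmetic
  have hθ : μ A ≤ μ (ZS S p) := measure_mono Set.inter_subset_right
  have hWu1 : μ Wu ≤ 1 := prob_le_one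
  have hc : (S.card : ℝ≥0∞) ≤ 2 * ((S.card : ℝ≥0∞) - 1) := by
    calc (S.card : ℝ≥0∞) ≤ ((2 * (S.card - 1) : ℕ) : ℝ≥0∞) := Nat.cast_le.mpr (by omega)
      _ = 2 * ((S.card : ℝ≥0∞) - 1) := by push_cast [ENNReal.natCast_sub]; ring
  have hbound : (S.card : ℝ≥0∞) * μ A + μ Wu + μ Wu ≤
      2 * (μ (ZS S p) * ((S.card : ℝ≥0∞) - 1)) + 2 := by
    have h1 : (S.card : ℝ≥0∞) * μ A ≤ 2 * (μ (ZS S p) * ((S.card : ℝ≥0∞) - 1)) := by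
      calc (S.card : ℝ≥0∞) * μ A ≤ (S.card : ℝ≥0∞) * μ (ZS S p) := mul_le_mul_right hθ _
        _ ≤ (2 * ((S.card : ℝ≥0∞) - 1)) * μ (ZS S p) := mul_le_mul_left hc _
        _ = 2 * (μ (ZS S p) * ((S.card : ℝ≥0∞) - 1)) := by ring
    calc (S.card : ℝ≥0∞) * μ A + μ Wu + μ Wu
        ≤ 2 * (μ (ZS S p) * ((S.card : ℝ≥0∞) - 1)) + 1 + 1 :=
          add_le_add (add_le_add h1 hWu1) hWu1
      _ = 2 * (μ (ZS S p) * ((S.card : ℝ≥0∞) - 1)) + 2 := by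
          rw [add_assoc, one_add_one_eq_two]
  have h2inv : (2 : ℝ≥0∞)⁻¹ * 2 = 1 := ENNReal.inv_mul_cancel two_ne_zero ENNReal.ofNat_ne_top
  calc (1/2) * ∫⁻ x, (({y | EE S p e x y}.encard : ℕ∞) : ℝ≥0∞) ∂μ
      ≤ (1/2) * ∫⁻ x, (f1 x + f2 x + f3 x + f4 x) ∂μ :=
        mul_le_mul_right (lintegral_mono hdeg) _
    _ = (1/2) * ((S.card : ℝ≥0∞) * μ A + μ Wu + μ Wu) := by rw [hint]
    _ ≤ (1/2) * (2 * (μ (ZS S p) * ((S.card : ℝ≥0∞) - 1)) + 2) := mul_le_mul_right hbound _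
    _ = 1 + μ (ZS S p) * ((S.card : ℝ≥0∞) - 1) := by
        rw [one_div, mul_add, ← mul_assoc, h2inv, one_mul, add_comm]
    _ = 1 + μ {x | InInfCluster (cayleyGraph Γ (S : Set Γ)) (config p x) 1}
          * ((S.card : ℝ≥0∞) - 1) := rfl
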